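/- Every quotient-closed full additive subcategory of representations of the linearly oriented quiver A_n equals C_a for some a ∈ M, i.e., its set of indecomposable objects is of the form {E^{ij} : i ≤ j < i + a_i} for a tuple (a_1,…,a_n) with 0 ≤ a_i ≤ n+1−i. -/

import Mathlib

open Classical

/-- A representation of a quiver (given by vertex type `ι`, arrow type `E`,
and source/target maps `s t : E → ι`) over a field `K`: a finite-dimensional
`K`-vector space at each vertex and a linear map along each arrow. -/
structure QRep (K : Type) [Field K] {ι : Type} {E : Type} (s t : E → ι) : Type 1 where
  V : ι → Type
  [addV : ∀ i, AddCommGroup (V i)]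
  [modV : ∀ i, Module K (V i)]
  [fdV : ∀ i, FiniteDimensional K (V i)]
  f : ∀ e : E, V (s e) →ₗ[K] V (t e)

attribute [instance] QRep.addV QRep.modV QRep.fdV

namespace QRep

variable {K : Type} [Field K] {ι E : Type} {s t : E → ι}

/-- A morphism of representations: linear maps at each vertex commuting with the arrow maps. -/
structure Hom (X Y : QRep K s t) : Type where
  φ : ∀ i, X.V i →ₗ[K] Y.V i
  comm : ∀ e, (Y.f e).comp (φ (s e)) = (φ (t e)).comp (X.f e)

def Hom.Surjective {X Y : QRep K s t} (f : Hom X Y) : Prop := ∀ i, Function.Surjective (f.φ i)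

def Hom.Injective {X Y : QRep K s t} (f : Hom X Y) : Prop := ∀ i, Function.Injective (f.φ i)

/-- Two representations are isomorphic if there is a morphism bijective at every vertex. -/
def Iso (X Y : QRep K s t) : Prop := ∃ f : Hom X Y, ∀ i, Function.Bijective (f.φ i)

/-- Direct sum of two representations, taken vertexwise. -/
def dsum (X Y : QRep K s t) : QRep K s t where
  V i := X.V i × Y.V i
  f e := (X.f e).prodMap (Y.f e)

instance : Module.Finite K PUnit :=
  Module.Finite.of_surjective (0 : K →ₗ[K] PUnit) (fun x => ⟨0, Subsingleton.elim _ _⟩)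

/-- The zero representation. -/
def zero : QRep K s t where
  V _ := PUnit
  f _ := 0

/-- A representation is zero if all its vector spaces are zero. -/
def IsZero (X : QRep K s t) : Prop := ∀ i, ∀ x : X.V i, x = 0

/-- Indecomposable: nonzero, and not isomorphic to a direct sum of two nonzero representations. -/
def Indec (X : QRep K s t) : Prop :=
  ¬ X.IsZero ∧ ∀ A B : QRep K s t, Iso X (A.dsum B) → A.IsZero ∨ B.IsZero

/-- Direct sum of a finite list of representations. -/
noncomputable def dsumList : List (QRep K s t) → QRep K s t
  | [] => zero
  | X :: L => X.dsum (dsumList L)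

/-- An extension `Y` of `Z` by `X`: an injective morphism `X → Y` and a surjective
morphism `Y → Z` whose vertexwise kernel is the image of `X`. -/
structure Extension (X Y Z : QRep K s t) : Type where
  incl : Hom X Y
  proj : Hom Y Z
  inj : ∀ i, Function.Injective (incl.φ i)
  surj : ∀ i, Function.Surjective (proj.φ i)
  exact : ∀ i, LinearMap.ker (proj.φ i) = LinearMap.range (incl.φ i)

/-- An extension is trivial (split) if there is a morphism `Y → X` restricting to the identity on `X`. -/
def Extension.Trivial {X Y Z : QRep K s t} (E : Extension X Y Z) : Prop :=
  ∃ r : Hom Y X, ∀ i x, r.φ i (E.incl.φ i x) = x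

/-- A subrepresentation of `Y`: a subspace at each vertex, stable under the arrow maps. -/
structure Sub (Y : QRep K s t) : Type where
  p : ∀ i, Submodule K (Y.V i)
  stable : ∀ e, ∀ x ∈ p (s e), Y.f e x ∈ p (t e)

def Sub.toRep {Y : QRep K s t} (S : Sub Y) : QRep K s t where
  V i := S.p i
  f e := (Y.f e).restrict (S.stable e)

/-- The quotient representation `Y/X`. -/
def Sub.quot {Y : QRep K s t} (S : Sub Y) : QRep K s t where
  V i := Y.V i ⧸ S.p i
  f e := Submodule.mapQ (S.p (s e)) (S.p (t e)) (Y.f e) (fun x hx => S.stable e x hx)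

/-- The inclusion morphism of a subrepresentation. -/
def Sub.incl {Y : QRep K s t} (S : Sub Y) : Hom S.toRep Y where
  φ i := (S.p i).subtype
  comm e := by ext x; rfl

/-- The quotient morphism onto the quotient representation. -/
def Sub.mkQ {Y : QRep K s t} (S : Sub Y) : Hom Y S.quot where
  φ i := (S.p i).mkQ
  comm e := by ext x; first | rfl | (simp only [LinearMap.comp_apply, Submodule.mkQ_apply]; exact Submodule.mapQ_apply _ _ _ _)

/-- The space of morphisms between two representations, as a subspace of the product of Hom spaces. -/
def HomSpace (X Y : QRep K s t) : Submodule K (∀ i, X.V i →ₗ[K] Y.V i) where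
  carrier := {φ | ∀ e, (Y.f e).comp (φ (s e)) = (φ (t e)).comp (X.f e)}
  add_mem' := by
    intro a b ha hb e
    simp only [Set.mem_setOf_eq] at ha hb
    simp [LinearMap.comp_add, LinearMap.add_comp, ha e, hb e]
  zero_mem' := by intro e; simp
  smul_mem' := by
    intro c a ha e
    simp only [Set.mem_setOf_eq] at ha
    simp [LinearMap.comp_smul, LinearMap.smul_comp, ha e]

end QRep
/-- The source of the `e`-th arrow of the linearly oriented quiver `Aₙ`
(vertices `0,…,n-1`, arrows `e → e+1` for `0 ≤ e < n-1`; 0-based indexing). -/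
def ASrc (n : ℕ) (e : Fin (n - 1)) : Fin n := ⟨e.val, by have := e.isLt; omega⟩

/-- The target of the `e`-th arrow of `Aₙ`. -/
def ATgt (n : ℕ) (e : Fin (n - 1)) : Fin n := ⟨e.val + 1, by have := e.isLt; omega⟩

/-- Representations of the linearly oriented quiver `Aₙ`. -/
abbrev ARep (K : Type) [Field K] (n : ℕ) := QRep K (ASrc n) (ATgt n)

/-- The canonical map from `M` to a submodule `T`: the identity if `T = ⊤`, zero otherwise. -/
noncomputable def toSub {K M : Type} [Field K] [AddCommGroup M] [Module K M]
    (T : Submodule K M) : M →ₗ[K] T :=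
  if h : T = ⊤ then LinearMap.codRestrict T LinearMap.id (fun x => by simp [h]) else 0

/-- The vertex spaces of the interval representation `E^{ij}`: `K` for `i ≤ p ≤ j`, zero otherwise. -/
def ESub (K : Type) [Field K] (n i j : ℕ) (p : Fin n) : Submodule K K :=
  if i ≤ p.val ∧ p.val ≤ j then ⊤ else ⊥

/-- The interval representation `E^{ij}` of `Aₙ` (0-based): one-dimensional spaces at
vertices `i,…,j`, identity maps between consecutive ones, zero elsewhere. -/
noncomputable def Eij (K : Type) [Field K] (n i j : ℕ) : ARep K n where
  V p := ESub K n i j p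
  f e := (toSub (ESub K n i j (ATgt n e))).comp (ESub K n i j (ASrc n e)).subtype

/-- Direct sum of interval representations indexed by a list of pairs. -/
noncomputable def intervalSum (K : Type) [Field K] (n : ℕ) (L : List (ℕ × ℕ)) : ARep K n :=
  QRep.dsumList (L.map fun pr => Eij K n pr.1 pr.2)

/-- A full additive subcategory of `rep Aₙ`, given by its set `S` of indecomposables
(pairs `(i,j)` standing for `E^{ij}`), is quotient-closed: whenever a direct sum of
intervals from `S` surjects onto a direct sum of intervals, all the latter intervals lie in `S`. -/
def QuotClosedSet (K : Type) [Field K] (n : ℕ) (S : Set (ℕ × ℕ)) : Prop :=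
  ∀ L : List (ℕ × ℕ), (∀ pr ∈ L, pr ∈ S) →
    ∀ L' : List (ℕ × ℕ), (∀ pr ∈ L', pr.1 ≤ pr.2 ∧ pr.2 < n) →
      (∃ f : QRep.Hom (intervalSum K n L) (intervalSum K n L'), f.Surjective) →
      ∀ pr ∈ L', pr ∈ S


section Aux

variable {K : Type} [Field K]

lemma toSub_val {M : Type} [AddCommGroup M] [Module K M] (T : Submodule K M) (x : M) :
    ((toSub T x : T) : M) = if T = ⊤ then x else 0 := by
  unfold toSub
  split <;> simp_all

lemma ESub_top {n i j : ℕ} {p : Fin n} (h : i ≤ p.val ∧ p.val ≤ j) :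
    ESub K n i j p = ⊤ := by
  unfold ESub; simp [h]

lemma ESub_ne_top {n i j : ℕ} {p : Fin n} (h : ¬ (i ≤ p.val ∧ p.val ≤ j)) :
    ESub K n i j p ≠ ⊤ := by
  unfold ESub; simp only [if_neg h]; exact bot_ne_top

lemma ESub_mem_zero {n i j : ℕ} {p : Fin n} (h : ¬ (i ≤ p.val ∧ p.val ≤ j))
    {x : K} (hx : x ∈ ESub K n i j p) : x = 0 := by
  unfold ESub at hx; rw [if_neg h] at hx; exact (Submodule.mem_bot K).1 hx

/-- The natural map `E^{ij} → E^{ij'}` at vertex `p`. -/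
noncomputable def emap (K : Type) [Field K] (n i j j' : ℕ) (p : Fin n) :
    (ESub K n i j p : Submodule K K) →ₗ[K] (ESub K n i j' p : Submodule K K) :=
  (toSub (ESub K n i j' p)).comp (ESub K n i j p).subtype

lemma emap_val (n i j j' : ℕ) (p : Fin n) (x : ESub K n i j p) :
    ((emap K n i j j' p x : ESub K n i j' p) : K)
      = if ESub K n i j' p = ⊤ then (x : K) else 0 := by
  simp [emap, toSub_val]

/-- The canonical surjection `E^{ij} → E^{ij'}` for `j' ≤ j`. -/
noncomputable def homE (n i j j' : ℕ) (hj : j' ≤ j) :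
    QRep.Hom (Eij K n i j) (Eij K n i j') where
  φ := emap K n i j j'
  comm e := by
    show (((toSub (ESub K n i j' (ATgt n e))).comp (ESub K n i j' (ASrc n e)).subtype).comp
          (emap K n i j j' (ASrc n e)))
        = (emap K n i j j' (ATgt n e)).comp
          ((toSub (ESub K n i j (ATgt n e))).comp (ESub K n i j (ASrc n e)).subtype)
    apply LinearMap.ext
    intro x
    apply Subtype.ext
    simp only [LinearMap.comp_apply, Submodule.subtype_apply, emap, toSub_val]
    by_cases htop : ESub K n i j' (ATgt n e) = ⊤
    · rw [if_pos htop, if_pos htop]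
      have htgt : (ATgt n e).val = e.val + 1 := rfl
      have hsrc : (ASrc n e).val = e.val := rfl
      have hcond : i ≤ e.val + 1 ∧ e.val + 1 ≤ j' := by
        by_contra hc
        exact ESub_ne_top (p := ATgt n e) (by rwa [htgt]) htop
      by_cases hip : i ≤ e.val
      · rw [if_pos (ESub_top (p := ASrc n e) (by rw [hsrc]; omega)),
            if_pos (ESub_top (p := ATgt n e) (by rw [htgt]; omega))]
      · have hx0 : (x : K) = 0 :=
          ESub_mem_zero (p := ASrc n e) (by rw [hsrc]; omega) x.2
        simp [hx0]
    · rw [if_neg htop, if_neg htop]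

lemma homE_surj (n i j j' : ℕ) (hj : j' ≤ j) (p : Fin n) :
    Function.Surjective ((homE (K := K) n i j j' hj).φ p) := by
  show Function.Surjective (emap K n i j j' p)
  intro z
  by_cases h : i ≤ p.val ∧ p.val ≤ j'
  · refine ⟨⟨(z : K), ?_⟩, ?_⟩
    · rw [ESub_top ⟨h.1, le_trans h.2 hj⟩]; trivial
    · apply Subtype.ext
      rw [emap_val, if_pos (ESub_top h)]
  · refine ⟨0, ?_⟩
    apply Subtype.ext
    rw [emap_val]
    have hz : (z : K) = 0 := ESub_mem_zero h z.2
    simp [hz]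

/-- The induced morphism between singleton interval sums. -/
noncomputable def homS (n i j j' : ℕ) (hj : j' ≤ j) :
    QRep.Hom (intervalSum K n [(i, j)]) (intervalSum K n [(i, j')]) where
  φ p := ((homE (K := K) n i j j' hj).φ p).prodMap LinearMap.id
  comm e := by
    apply LinearMap.ext
    intro x
    apply Prod.ext
    · exact LinearMap.congr_fun ((homE (K := K) n i j j' hj).comm e) x.1
    · exact Subsingleton.elim (α := PUnit) _ _

lemma homS_surj (n i j j' : ℕ) (hj : j' ≤ j) :
    (homS (K := K) n i j j' hj).Surjective := by
  intro p
  show Function.Surjective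
    (((homE (K := K) n i j j' hj).φ p).prodMap (LinearMap.id (R := K) (M := PUnit)))
  rw [LinearMap.coe_prodMap]
  exact (homE_surj n i j j' hj p).prodMap Function.surjective_id

lemma down_closed {n : ℕ} {S : Set (ℕ × ℕ)} (hq : QuotClosedSet K n S)
    {i j j' : ℕ} (hij : (i, j) ∈ S) (h1 : i ≤ j') (h2 : j' ≤ j) (h3 : j < n) :
    (i, j') ∈ S := by
  refine hq [(i, j)] (by simpa using hij) [(i, j')]
    (by simp; omega) ⟨homS n i j j' h2, homS_surj n i j j' h2⟩ (i, j') (by simp)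

end Aux

/-- every quotient-closed full additive subcategory of `rep Aₙ` (given by its
set `S` of indecomposables, i.e. of interval pairs) is of the form `C_a`: there is a tuple
`a` with `a i ≤ n - i` (0-based) such that `S = {(i,j) : i ≤ j < i + a i}`. -/
theorem stmt10 (K : Type) [Field K] (n : ℕ) (S : Set (ℕ × ℕ))
    (hS : ∀ pr ∈ S, pr.1 ≤ pr.2 ∧ pr.2 < n) (hq : QuotClosedSet K n S) :
    ∃ a : ℕ → ℕ, (∀ i < n, a i ≤ n - i) ∧
      S = {pr : ℕ × ℕ | pr.1 ≤ pr.2 ∧ pr.2 < n ∧ pr.2 < pr.1 + a pr.1} := by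
  classical
  set a : ℕ → ℕ := fun i =>
    if ∃ j, (i, j) ∈ S then Nat.findGreatest (fun j => (i, j) ∈ S) n + 1 - i else 0 with ha
  refine ⟨a, ?_, ?_⟩
  · intro i hi
    by_cases h : ∃ j, (i, j) ∈ S
    · obtain ⟨j, hj⟩ := h
      have hex : ∃ j', (i, j') ∈ S := ⟨j, hj⟩
      have hmax : (i, Nat.findGreatest (fun j => (i, j) ∈ S) n) ∈ S :=
        Nat.findGreatest_spec (P := fun j => (i, j) ∈ S) (le_of_lt (hS _ hj).2) hj
      have hb := (hS _ hmax).2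
      simp only [ha]
      rw [if_pos hex]
      omega
    · simp only [ha]
      rw [if_neg h]
      omega
  · ext pr
    obtain ⟨i, j⟩ := pr
    simp only [Set.mem_setOf_eq]
    constructor
    · intro hmem
      have hc := hS _ hmem
      have hex : ∃ j', (i, j') ∈ S := ⟨j, hmem⟩
      have hle : j ≤ Nat.findGreatest (fun j => (i, j) ∈ S) n :=
        Nat.le_findGreatest (le_of_lt hc.2) hmem
      refine ⟨hc.1, hc.2, ?_⟩
      simp only [ha]
      rw [if_pos hex]
      omega
    · rintro ⟨h1, h2, h3⟩
      by_cases h : ∃ j, (i, j) ∈ S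
      · simp only [ha] at h3
        rw [if_pos h] at h3
        obtain ⟨j0, hj0⟩ := h
        have hmax : (i, Nat.findGreatest (fun j => (i, j) ∈ S) n) ∈ S :=
          Nat.findGreatest_spec (P := fun j => (i, j) ∈ S) (le_of_lt (hS _ hj0).2) hj0
        have hcm := hS _ hmax
        exact down_closed hq hmax h1 (by omega) hcm.2
      · simp only [ha] at h3
        rw [if_neg h] at h3
        omega
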